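/- Let Ψ : ℂ^d → ℂ^d be a real-linear map and Q : ℂ^d×ℂ^k → ℝ a real quadratic form such that: (i) the real-linear map (q,ξ) ↦ ∇_ξQ(q,ξ) from ℂ^d×ℂ^k to ℂ^k is surjective; and (ii) {(q, ∇_qQ(q,ξ)) : (q,ξ) with ∇_ξQ(q,ξ) = 0} = {((z+Ψ(z))/2, i·(z−Ψ(z))) : z ∈ ℂ^d}. Then the real dimension of the kernel of the gradient map ∇Q : ℂ^d×ℂ^k → ℂ^d×ℂ^k (which is real-linear since Q is quadratic) equals the real dimension of the kernel of Ψ − id. -/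

import Mathlib

noncomputable section
open Complex Function

abbrev Cd (d : ℕ) : Type := EuclideanSpace ℂ (Fin d)

/-- partial gradient with respect to the base variable q. -/
def gradQ {d k : ℕ} (F : Cd d × Cd k → ℝ) (p : Cd d × Cd k) : Cd d :=
  gradient (fun q => F (q, p.2)) p.1

/-- partial gradient with respect to the fiber variable ξ. -/
def gradXi {d k : ℕ} (F : Cd d × Cd k → ℝ) (p : Cd d × Cd k) : Cd k :=
  gradient (fun ξ => F (p.1, ξ)) p.2

open InnerProductSpace in
theorem aux_hasGradientAt_left {E F : Type*} [NormedAddCommGroup E] [InnerProductSpace ℝ E]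
    [CompleteSpace E] [NormedAddCommGroup F] [NormedSpace ℝ F]
    (Bc : (E × F) →L[ℝ] (E × F) →L[ℝ] ℝ) (hs : ∀ v w, Bc v w = Bc w v) (p : E × F) :
    HasGradientAt (fun q : E => Bc (q, p.2) (q, p.2))
      ((toDual ℝ E).symm (((2:ℝ) • Bc p).comp (ContinuousLinearMap.inl ℝ E F))) p.1 := by
  rw [hasGradientAt_iff_hasFDerivAt, LinearIsometryEquiv.apply_symm_apply]
  have hf : HasFDerivAt (fun q : E => (q, p.2)) (ContinuousLinearMap.inl ℝ E F) p.1 :=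
    (hasFDerivAt_id _).prodMk (hasFDerivAt_const _ _)
  have h2 := Bc.hasFDerivAt_of_bilinear hf hf
  refine h2.congr_fderiv ?_ |>.congr_fderiv rfl
  symm
  ext h
  simp [ContinuousLinearMap.precompR, ContinuousLinearMap.precompL, two_smul]
  rw [hs]

open InnerProductSpace in
theorem aux_hasGradientAt_right {E F : Type*} [NormedAddCommGroup E] [NormedSpace ℝ E]
    [NormedAddCommGroup F] [InnerProductSpace ℝ F] [CompleteSpace F]
    (Bc : (E × F) →L[ℝ] (E × F) →L[ℝ] ℝ) (hs : ∀ v w, Bc v w = Bc w v) (p : E × F) :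
    HasGradientAt (fun ξ : F => Bc (p.1, ξ) (p.1, ξ))
      ((toDual ℝ F).symm (((2:ℝ) • Bc p).comp (ContinuousLinearMap.inr ℝ E F))) p.2 := by
  rw [hasGradientAt_iff_hasFDerivAt, LinearIsometryEquiv.apply_symm_apply]
  have hf : HasFDerivAt (fun ξ : F => (p.1, ξ)) (ContinuousLinearMap.inr ℝ E F) p.2 :=
    (hasFDerivAt_const _ _).prodMk (hasFDerivAt_id _)
  have h2 := Bc.hasFDerivAt_of_bilinear hf hf
  refine h2.congr_fderiv ?_ |>.congr_fderiv rfl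
  symm
  ext h
  simp [ContinuousLinearMap.precompR, ContinuousLinearMap.precompL, two_smul]
  rw [hs]

set_option maxHeartbeats 1000000 in
theorem stmt13 (d k : ℕ) (Ψ : Cd d →ₗ[ℝ] Cd d) (Q : Cd d × Cd k → ℝ)
    (hquad : ∃ Q' : QuadraticForm ℝ (Cd d × Cd k), ∀ p, Q p = Q' p)
    (hsurj : Function.Surjective (fun p : Cd d × Cd k => gradXi Q p))
    (hgen :
      {p : Cd d × Cd d | ∃ q ξ, gradXi Q (q, ξ) = 0 ∧ p = (q, gradQ Q (q, ξ))}
        = {p : Cd d × Cd d |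
            ∃ z, p = ((2⁻¹ : ℝ) • (z + Ψ z), Complex.I • (z - Ψ z))}) :
    ∃ W : Submodule ℝ (Cd d × Cd k),
      (W : Set (Cd d × Cd k)) = {p | gradQ Q p = 0 ∧ gradXi Q p = 0} ∧
      Module.finrank ℝ W = Module.finrank ℝ (LinearMap.ker (Ψ - LinearMap.id)) := by
  classical
  obtain ⟨Q', hQ'⟩ := hquad
  -- the symmetric bilinear form associated to `Q'`, as a continuous bilinear map
  set Bl : LinearMap.BilinForm ℝ (Cd d × Cd k) := QuadraticMap.associated (R := ℝ) Q' with hBldef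
  have hBlsymm : ∀ v w, Bl v w = Bl w v := fun v w =>
    (QuadraticMap.associated_isSymm ℝ Q' v w)
  let M : (Cd d × Cd k) →ₗ[ℝ] ((Cd d × Cd k) →L[ℝ] ℝ) :=
    (LinearMap.toContinuousLinearMap : ((Cd d × Cd k) →ₗ[ℝ] ℝ) ≃ₗ[ℝ] _).toLinearMap ∘ₗ Bl
  set Bc : (Cd d × Cd k) →L[ℝ] ((Cd d × Cd k) →L[ℝ] ℝ) := LinearMap.toContinuousLinearMap M
    with hBcdef
  have hBc : ∀ v w, Bc v w = Bl v w := fun v w => by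
    simp [hBcdef, M]
  have hBcsymm : ∀ v w, Bc v w = Bc w v := fun v w => by rw [hBc, hBc, hBlsymm]
  have hQb : ∀ v, Q v = Bc v v := fun v => by
    rw [hQ', hBc, hBldef, QuadraticMap.associated_eq_self_apply]
  -- the partial gradients, as linear maps
  let A : (Cd d × Cd k) →ₗ[ℝ] Cd d :=
    { toFun := fun p => (InnerProductSpace.toDual ℝ (Cd d)).symm
        (((2:ℝ) • Bc p).comp (ContinuousLinearMap.inl ℝ (Cd d) (Cd k)))
      map_add' := fun a b => by
        simp [smul_add, ContinuousLinearMap.add_comp]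
      map_smul' := fun c a => by
        simp [smul_comm c (2:ℝ), ContinuousLinearMap.smul_comp] }
  let C : (Cd d × Cd k) →ₗ[ℝ] Cd k :=
    { toFun := fun p => (InnerProductSpace.toDual ℝ (Cd k)).symm
        (((2:ℝ) • Bc p).comp (ContinuousLinearMap.inr ℝ (Cd d) (Cd k)))
      map_add' := fun a b => by
        simp [smul_add, ContinuousLinearMap.add_comp]
      map_smul' := fun c a => by
        simp [smul_comm c (2:ℝ), ContinuousLinearMap.smul_comp] }
  have hA : ∀ p, gradQ Q p = A p := fun p => by
    have h1 : (fun q => Q (q, p.2)) = fun q => Bc (q, p.2) (q, p.2) := funext fun q => hQb _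
    unfold gradQ
    rw [h1]
    exact (aux_hasGradientAt_left Bc hBcsymm p).gradient
  have hC : ∀ p, gradXi Q p = C p := fun p => by
    have h1 : (fun ξ => Q (p.1, ξ)) = fun ξ => Bc (p.1, ξ) (p.1, ξ) := funext fun ξ => hQb _
    unfold gradXi
    rw [h1]
    exact (aux_hasGradientAt_right Bc hBcsymm p).gradient
  -- the map `T z = ((z+Ψz)/2, i(z−Ψz))`
  let T : Cd d →ₗ[ℝ] Cd d × Cd d :=
    { toFun := fun z => ((2⁻¹ : ℝ) • (z + Ψ z), Complex.I • (z - Ψ z))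
      map_add' := fun a b => by
        refine Prod.ext ?_ ?_ <;> simp [smul_add, smul_sub] <;> abel
      map_smul' := fun c a => by
        refine Prod.ext ?_ ?_ <;>
          simp [smul_add, smul_sub, smul_comm c (2⁻¹ : ℝ), smul_comm c Complex.I] }
  have hTinj : Function.Injective T := by
    rw [← LinearMap.ker_eq_bot]
    ext z
    simp only [LinearMap.mem_ker, Submodule.mem_bot]
    constructor
    · intro hz
      have h1 : (2⁻¹ : ℝ) • (z + Ψ z) = 0 := congrArg Prod.fst hz
      have h2 : Complex.I • (z - Ψ z) = 0 := congrArg Prod.snd hz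
      have h3 : z - Ψ z = 0 := by
        rcases smul_eq_zero.mp h2 with h | h
        · exact absurd h Complex.I_ne_zero
        · exact h
      have h4 : Ψ z = z := by linear_combination (norm := abel) h3.symm
      rw [h4] at h1
      have h5 : z + z = 0 := by
        rcases smul_eq_zero.mp h1 with h | h
        · norm_num at h
        · exact h
      have h6 : (2:ℝ) • z = 0 := by rw [two_smul]; exact h5
      rcases smul_eq_zero.mp h6 with h | h
      · norm_num at h
      · exact h
    · rintro rfl
      exact map_zero _
  -- key: translate `hgen` into submodule language
  let φ : (Cd d × Cd k) →ₗ[ℝ] Cd d × Cd d := (LinearMap.fst ℝ (Cd d) (Cd k)).prod A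
  let K := LinearMap.ker C
  have hsets : Submodule.map φ K = LinearMap.range T := by
    apply SetLike.coe_injective
    have h1 : (Submodule.map φ K : Set (Cd d × Cd d)) =
        {p : Cd d × Cd d | ∃ q ξ, gradXi Q (q, ξ) = 0 ∧ p = (q, gradQ Q (q, ξ))} := by
      ext p
      simp only [Submodule.mem_map, LinearMap.mem_ker, SetLike.mem_coe, Set.mem_setOf_eq]
      constructor
      · rintro ⟨⟨q, ξ⟩, hx, rfl⟩
        exact ⟨q, ξ, by rw [hC]; exact hx, by simp [φ, hA]⟩
      · rintro ⟨q, ξ, hx, rfl⟩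
        exact ⟨(q, ξ), by rw [hC] at hx; exact hx, by simp [φ, hA]⟩
    have h2 : (LinearMap.range T : Set (Cd d × Cd d)) =
        {p : Cd d × Cd d | ∃ z, p = ((2⁻¹ : ℝ) • (z + Ψ z), Complex.I • (z - Ψ z))} := by
      ext p
      simp only [LinearMap.mem_range, SetLike.mem_coe, Set.mem_setOf_eq]
      exact ⟨fun ⟨z, hz⟩ => ⟨z, hz.symm⟩, fun ⟨z, hz⟩ => ⟨z, hz.symm⟩⟩
    rw [h1, h2, hgen]
  -- dimension count: `φ` restricted to `K` is injective
  have hrangeC : LinearMap.range C = ⊤ := by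
    rw [LinearMap.range_eq_top]
    intro y
    obtain ⟨p, hp⟩ := hsurj y
    exact ⟨p, by rw [← hC]; exact hp⟩
  have eK : Module.finrank ℝ K = Module.finrank ℝ (Cd d) := by
    have h := LinearMap.finrank_range_add_finrank_ker C
    rw [hrangeC, finrank_top, Module.finrank_prod] at h
    have h' : Module.finrank ℝ K = Module.finrank ℝ (LinearMap.ker C) := rfl
    rw [h']
    omega
  have eM : Module.finrank ℝ (Submodule.map φ K) = Module.finrank ℝ (Cd d) := by
    rw [hsets, LinearMap.finrank_range_of_inj hTinj]
  let g : K →ₗ[ℝ] Cd d × Cd d := φ ∘ₗ K.subtype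
  have hrg : LinearMap.range g = Submodule.map φ K := by
    rw [LinearMap.range_comp, Submodule.range_subtype]
  have hginj : Function.Injective g := by
    rw [← LinearMap.ker_eq_bot]
    have h := LinearMap.finrank_range_add_finrank_ker g
    have h2 : Module.finrank ℝ (LinearMap.range g) = Module.finrank ℝ (Cd d) := by
      rw [hrg]; exact eM
    have h3 : Module.finrank ℝ (LinearMap.ker g) = 0 := by omega
    exact Submodule.finrank_eq_zero.mp h3
  have hinj : ∀ p : Cd d × Cd k, C p = 0 → p.1 = 0 → A p = 0 → p = 0 := by
    intro p h1 h2 h3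
    have : g ⟨p, h1⟩ = g 0 := by
      simp [g, φ, h2, h3, Prod.ext_iff]
    exact congrArg Subtype.val (hginj this)
  -- the full kernel
  let L := A.prod C
  refine ⟨LinearMap.ker L, ?_, ?_⟩
  · ext p
    simp [L, LinearMap.mem_ker, Prod.ext_iff, hA, hC]
  · -- `fst` is injective on `ker L`, with image `ker (Ψ - id)`
    let N := LinearMap.ker L
    let g' : N →ₗ[ℝ] Cd d := (LinearMap.fst ℝ (Cd d) (Cd k)) ∘ₗ N.subtype
    have hg'inj : Function.Injective g' := by
      rw [← LinearMap.ker_eq_bot]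
      apply (Submodule.eq_bot_iff _).mpr
      rintro ⟨p, hp⟩ h0
      have hp' : A p = 0 ∧ C p = 0 := by
        have h1 : L p = 0 := hp
        simpa [L, Prod.ext_iff] using h1
      have hp1 : p.1 = 0 := h0
      exact Subtype.ext (hinj p hp'.2 hp1 hp'.1)
    have hrg' : Submodule.map (LinearMap.fst ℝ (Cd d) (Cd k)) N = LinearMap.range g' := by
      rw [LinearMap.range_comp, Submodule.range_subtype]
    have hmapN : Submodule.map (LinearMap.fst ℝ (Cd d) (Cd k)) N
        = LinearMap.ker (Ψ - LinearMap.id) := by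
      ext q
      simp only [Submodule.mem_map, LinearMap.mem_ker, LinearMap.sub_apply, LinearMap.id_apply,
        sub_eq_zero]
      constructor
      · rintro ⟨⟨q', ξ⟩, hx, rfl⟩
        have hx' : A (q', ξ) = 0 ∧ C (q', ξ) = 0 := by
          have h1 : L (q', ξ) = 0 := hx
          simpa [L, Prod.ext_iff] using h1
        have hmem : ((q', (0 : Cd d)) : Cd d × Cd d) ∈
            {p : Cd d × Cd d | ∃ q ξ, gradXi Q (q, ξ) = 0 ∧ p = (q, gradQ Q (q, ξ))} := by
          exact ⟨q', ξ, by rw [hC]; exact hx'.2, by rw [hA, hx'.1]⟩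
        rw [hgen] at hmem
        obtain ⟨z, hz⟩ := hmem
        have h1 : q' = (2⁻¹ : ℝ) • (z + Ψ z) := congrArg Prod.fst hz
        have h2 : (0 : Cd d) = Complex.I • (z - Ψ z) := congrArg Prod.snd hz
        have h3 : z - Ψ z = 0 := by
          rcases smul_eq_zero.mp h2.symm with h | h
          · exact absurd h Complex.I_ne_zero
          · exact h
        have h4 : Ψ z = z := by linear_combination (norm := abel) h3.symm
        have h5 : q' = z := by
          rw [h1, h4, ← two_smul ℝ z, smul_smul]
          norm_num
        show Ψ q' = q'
        rw [h5, h4]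
      · intro hq
        have hmem : ((q, (0 : Cd d)) : Cd d × Cd d) ∈
            {p : Cd d × Cd d | ∃ z, p = ((2⁻¹ : ℝ) • (z + Ψ z), Complex.I • (z - Ψ z))} := by
          refine ⟨q, ?_⟩
          rw [hq]
          refine Prod.ext ?_ ?_
          · simp only
            rw [← two_smul ℝ q, smul_smul]
            norm_num
          · simp
        rw [← hgen] at hmem
        obtain ⟨q', ξ, hx, heq⟩ := hmem
        have hq1 : q' = q := (congrArg Prod.fst heq).symm
        have hq2 : gradQ Q (q', ξ) = 0 := (congrArg Prod.snd heq).symm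
        rw [hq1] at hx hq2
        rw [hA] at hq2
        rw [hC] at hx
        refine ⟨(q, ξ), LinearMap.mem_ker.mpr ?_, rfl⟩
        have : L (q, ξ) = (A (q, ξ), C (q, ξ)) := rfl
        rw [this, hq2, hx]
        rfl
    rw [← LinearMap.finrank_range_of_inj hg'inj, ← hrg', hmapN]
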